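/- Let c, c₀ be real numbers and define F(x) := 2√2·c·x·(ln x − 1) + 2·x·ln x·(ln x − 2) + 4·x + c²·x + c₀ for x > 0. Then F″(x) = 2√2·c/x + 4·(ln x)/x and (x²/8)·(F″(x))² = F′(x) for all x > 0. -/

import Mathlib

open Real Filter

private lemma hasDerivAt_G (c c₀ : ℝ) {x : ℝ} (hx : 0 < x) :
    HasDerivAt (fun y : ℝ => 2 * Real.sqrt 2 * c * y * (Real.log y - 1)
        + 2 * y * Real.log y * (Real.log y - 2) + 4 * y + c ^ 2 * y + c₀)
      (2 * Real.sqrt 2 * c * Real.log x + 2 * (Real.log x) ^ 2 + c ^ 2) x := by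
  have hlog := Real.hasDerivAt_log hx.ne'
  have hA : HasDerivAt (fun y : ℝ => 2 * Real.sqrt 2 * c * y * (Real.log y - 1))
      ((2 * Real.sqrt 2 * c * 1) * (Real.log x - 1) + (2 * Real.sqrt 2 * c * x) * x⁻¹) x :=
    (((hasDerivAt_id x).const_mul (2 * Real.sqrt 2 * c)).mul (hlog.sub_const 1))
  have hB : HasDerivAt (fun y : ℝ => 2 * y * Real.log y * (Real.log y - 2))
      ((2 * 1 * Real.log x + 2 * x * x⁻¹) * (Real.log x - 2) + (2 * x * Real.log x) * x⁻¹) x :=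
    ((((hasDerivAt_id x).const_mul 2).mul hlog).mul (hlog.sub_const 2))
  have h := ((((hA.add hB).add ((hasDerivAt_id x).const_mul 4)).add
      ((hasDerivAt_id x).const_mul (c ^ 2))).add_const c₀)
  refine h.congr_deriv ?_
  have hx0 : x * x⁻¹ = 1 := mul_inv_cancel₀ hx.ne'
  linear_combination (2 * Real.sqrt 2 * c + 4 * Real.log x - 4) * hx0

private lemma derivF_eq (c c₀ : ℝ) (F : ℝ → ℝ)
    (hF : ∀ x : ℝ, 0 < x →
      F x = 2 * Real.sqrt 2 * c * x * (Real.log x - 1)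
        + 2 * x * Real.log x * (Real.log x - 2) + 4 * x + c ^ 2 * x + c₀) :
    ∀ x : ℝ, 0 < x →
      deriv F x = 2 * Real.sqrt 2 * c * Real.log x + 2 * (Real.log x) ^ 2 + c ^ 2 := by
  intro x hx
  have hev : F =ᶠ[nhds x] (fun y : ℝ => 2 * Real.sqrt 2 * c * y * (Real.log y - 1)
        + 2 * y * Real.log y * (Real.log y - 2) + 4 * y + c ^ 2 * y + c₀) := by
    filter_upwards [eventually_gt_nhds hx] with y hy using hF y hy
  rw [hev.deriv_eq]
  exact (hasDerivAt_G c c₀ hx).deriv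

theorem stmt_12 (c c₀ : ℝ) (F : ℝ → ℝ)
    (hF : ∀ x : ℝ, 0 < x →
      F x = 2 * Real.sqrt 2 * c * x * (Real.log x - 1)
        + 2 * x * Real.log x * (Real.log x - 2) + 4 * x + c ^ 2 * x + c₀) :
    ∀ x : ℝ, 0 < x →
      deriv (deriv F) x = 2 * Real.sqrt 2 * c / x + 4 * Real.log x / x ∧
      (x ^ 2 / 8) * (deriv (deriv F) x) ^ 2 = deriv F x := by
  intro x hx
  have hlog := Real.hasDerivAt_log hx.ne'
  have hev2 : deriv F =ᶠ[nhds x]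
      (fun y : ℝ => 2 * Real.sqrt 2 * c * Real.log y + 2 * (Real.log y) ^ 2 + c ^ 2) := by
    filter_upwards [eventually_gt_nhds hx] with y hy using derivF_eq c c₀ F hF y hy
  have hD2 : deriv (deriv F) x = 2 * Real.sqrt 2 * c / x + 4 * Real.log x / x := by
    rw [hev2.deriv_eq]
    have h : HasDerivAt (fun y : ℝ => 2 * Real.sqrt 2 * c * Real.log y
        + 2 * (Real.log y) ^ 2 + c ^ 2)
        (2 * Real.sqrt 2 * c * x⁻¹ + 2 * (2 * Real.log x ^ (2 - 1) * x⁻¹)) x :=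
      ((hlog.const_mul (2 * Real.sqrt 2 * c)).add
        (((hlog.pow 2)).const_mul 2)).add_const (c ^ 2)
    rw [h.deriv]
    field_simp
    ring
  refine ⟨hD2, ?_⟩
  rw [hD2, derivF_eq c c₀ F hF x hx]
  have h2 : Real.sqrt 2 ^ 2 = 2 := Real.sq_sqrt (by norm_num)
  field_simp
  linear_combination 4 * c ^ 2 * h2
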